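/- Let M be a real 3×3 matrix with det M > 0, and let μ₁ ≥ μ₂ ≥ μ₃ > 0 be the eigenvalues of Mᵗ·M. If R₀ ∈ SO(3) is such that R₀·M is symmetric, then Tr(R₀·M) belongs to the four-element list {√μ₁+√μ₂+√μ₃, √μ₁−√μ₂−√μ₃, −√μ₁+√μ₂−√μ₃, −√μ₁−√μ₂+√μ₃}. -/

import Mathlib

open Matrix Polynomial

lemma perm3 {a b c x y z : ℝ} (h : ({a,b,c} : Multiset ℝ) = {x,y,z}) :
    (a=x∧b=y∧c=z)∨(a=x∧b=z∧c=y)∨(a=y∧b=x∧c=z)∨(a=y∧b=z∧c=x)∨(a=z∧b=x∧c=y)∨(a=z∧b=y∧c=x) := by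
  simp only [Multiset.insert_eq_cons] at h
  rcases Multiset.cons_eq_cons.mp h with ⟨h1, h2⟩ | ⟨-, cs, h1, h2⟩
  · rcases Multiset.cons_eq_cons.mp h2 with ⟨h3, h4⟩ | ⟨-, ds, h3, h4⟩
    · exact Or.inl ⟨h1, h3, Multiset.singleton_inj.mp h4⟩
    · obtain ⟨h5, h6⟩ := (Multiset.singleton_eq_cons_iff _).mp h3
      subst h6
      obtain ⟨h7, -⟩ := (Multiset.singleton_eq_cons_iff _).mp h4
      exact Or.inr (Or.inl ⟨h1, h7.symm, h5⟩)
  · rcases Multiset.cons_eq_cons.mp h1 with ⟨h3, h4⟩ | ⟨-, ds, h3, h4⟩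
    · subst h4
      rcases Multiset.cons_eq_cons.mp h2 with ⟨h5, h6⟩ | ⟨-, es, h5, h6⟩
      · exact Or.inr <| Or.inr <| Or.inl ⟨h5.symm, h3, (Multiset.singleton_inj.mp h6).symm⟩
      · obtain ⟨h7, h8⟩ := (Multiset.singleton_eq_cons_iff _).mp h5
        subst h8
        obtain ⟨h9, -⟩ := (Multiset.singleton_eq_cons_iff _).mp h6
        exact Or.inr <| Or.inr <| Or.inr <| Or.inr <| Or.inl ⟨h7.symm, h3, h9⟩
    · obtain ⟨h5, h6⟩ := (Multiset.singleton_eq_cons_iff _).mp h3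
      subst h6
      rw [Multiset.cons_zero] at h4
      subst h4
      rcases Multiset.cons_eq_cons.mp h2 with ⟨h9, h10⟩ | ⟨-, es, h9, h10⟩
      · exact Or.inr <| Or.inr <| Or.inr <| Or.inl
          ⟨h9.symm, (Multiset.singleton_inj.mp h10).symm, h5⟩
      · obtain ⟨h11, h12⟩ := (Multiset.singleton_eq_cons_iff _).mp h9
        subst h12
        obtain ⟨h13, -⟩ := (Multiset.singleton_eq_cons_iff _).mp h10
        exact Or.inr <| Or.inr <| Or.inr <| Or.inr <| Or.inr ⟨h11.symm, h13, h5⟩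

lemma sq_cases {t μ : ℝ} (h : t^2 = μ) : t = Real.sqrt μ ∨ t = -Real.sqrt μ := by
  have : |t| = Real.sqrt μ := by rw [← h, Real.sqrt_sq_eq_abs]
  exact (abs_eq (Real.sqrt_nonneg _)).mp this

set_option maxHeartbeats 2000000 in
lemma key_sum {a b c μ₁ μ₂ μ₃ : ℝ} (h1 : 0 < μ₁) (h2 : 0 < μ₂) (h3 : 0 < μ₃)
    (hm : ({a^2,b^2,c^2} : Multiset ℝ) = {μ₁,μ₂,μ₃}) (hpos : 0 < a*b*c) :
    a+b+c = Real.sqrt μ₁ + Real.sqrt μ₂ + Real.sqrt μ₃ ∨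
    a+b+c = Real.sqrt μ₁ - Real.sqrt μ₂ - Real.sqrt μ₃ ∨
    a+b+c = -Real.sqrt μ₁ + Real.sqrt μ₂ - Real.sqrt μ₃ ∨
    a+b+c = -Real.sqrt μ₁ - Real.sqrt μ₂ + Real.sqrt μ₃ := by
  have p1 : 0 < Real.sqrt μ₁ := Real.sqrt_pos.mpr h1
  have p2 : 0 < Real.sqrt μ₂ := Real.sqrt_pos.mpr h2
  have p3 : 0 < Real.sqrt μ₃ := Real.sqrt_pos.mpr h3
  rcases perm3 hm with ⟨ha,hb,hc⟩|⟨ha,hb,hc⟩|⟨ha,hb,hc⟩|⟨ha,hb,hc⟩|⟨ha,hb,hc⟩|⟨ha,hb,hc⟩ <;>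
  rcases sq_cases ha with rfl | rfl <;>
  rcases sq_cases hb with rfl | rfl <;>
  rcases sq_cases hc with rfl | rfl <;>
  first
  | (left; ring1)
  | (right; left; ring1)
  | (right; right; left; ring1)
  | (right; right; right; ring1)
  | (exfalso; nlinarith [mul_pos (mul_pos p1 p2) p3])

lemma charpoly_unitary_conj {n : Type*} [Fintype n] [DecidableEq n]
    (U : Matrix.unitaryGroup n ℝ) (A : Matrix n n ℝ) :
    ((U : Matrix n n ℝ) * A * star (U : Matrix n n ℝ)).charpoly = A.charpoly := by
  set V : Matrix n n ℝ := (U : Matrix n n ℝ)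
  have hVs : V * star V = 1 := Unitary.mul_star_self_of_mem U.2
  have hsV : star V * V = 1 := Unitary.star_mul_self_of_mem U.2
  unfold Matrix.charpoly
  have key : charmatrix (V * A * star V) =
      (C : ℝ →+* ℝ[X]).mapMatrix V * charmatrix A * (C : ℝ →+* ℝ[X]).mapMatrix (star V) := by
    unfold charmatrix
    rw [mul_sub, sub_mul]
    congr 1
    · calc Matrix.scalar n (X : ℝ[X])
          = Matrix.scalar n (X : ℝ[X]) *
            ((C : ℝ →+* ℝ[X]).mapMatrix V * (C : ℝ →+* ℝ[X]).mapMatrix (star V)) := by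
            rw [← _root_.map_mul, hVs, _root_.map_one, mul_one]
        _ = (C : ℝ →+* ℝ[X]).mapMatrix V * Matrix.scalar n (X : ℝ[X]) *
            (C : ℝ →+* ℝ[X]).mapMatrix (star V) := by
            rw [← mul_assoc,
              (Matrix.scalar_commute (X : ℝ[X]) (fun r' => Commute.all _ _) _).eq]
    · rw [← _root_.map_mul, ← _root_.map_mul]
  have h1 : (C : ℝ →+* ℝ[X]).mapMatrix (star V) * (C : ℝ →+* ℝ[X]).mapMatrix V = 1 := by
    rw [← _root_.map_mul, hsV, _root_.map_one]
  rw [key, det_mul, det_mul, mul_comm, ← mul_assoc, ← det_mul, h1, det_one, one_mul]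

lemma charpoly_diag3 (d : Fin 3 → ℝ) :
    (Matrix.diagonal d).charpoly = ∏ i, (X - C (d i)) := by
  unfold Matrix.charpoly
  have : charmatrix (Matrix.diagonal d) = Matrix.diagonal (fun i => X - C (d i)) := by
    ext i j
    by_cases h : i = j
    · subst h; simp
    · simp [Matrix.charmatrix_apply_ne _ _ _ h, Matrix.diagonal_apply_ne _ h]
  rw [this, det_diagonal]

lemma roots_cubic (a b c : ℝ) : ((X - C a) * (X - C b) * (X - C c)).roots = {a, b, c} := by
  rw [roots_mul (mul_ne_zero (mul_ne_zero (X_sub_C_ne_zero a) (X_sub_C_ne_zero b))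
      (X_sub_C_ne_zero c)),
    roots_mul (mul_ne_zero (X_sub_C_ne_zero a) (X_sub_C_ne_zero b)),
    roots_X_sub_C, roots_X_sub_C, roots_X_sub_C]
  rfl

/-- Critical values of τ_M when det M > 0. -/
theorem critical_values_det_pos (M : Matrix (Fin 3) (Fin 3) ℝ) (hM : 0 < M.det)
    (μ₁ μ₂ μ₃ : ℝ) (hμ : μ₁ ≥ μ₂ ∧ μ₂ ≥ μ₃ ∧ μ₃ > 0)
    (hchar : (Mᵀ * M).charpoly = (X - C μ₁) * (X - C μ₂) * (X - C μ₃))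
    (R₀ : Matrix (Fin 3) (Fin 3) ℝ) (hR : R₀ᵀ * R₀ = 1) (hRdet : R₀.det = 1)
    (hsymm : (R₀ * M)ᵀ = R₀ * M) :
    Matrix.trace (R₀ * M) = Real.sqrt μ₁ + Real.sqrt μ₂ + Real.sqrt μ₃ ∨
    Matrix.trace (R₀ * M) = Real.sqrt μ₁ - Real.sqrt μ₂ - Real.sqrt μ₃ ∨
    Matrix.trace (R₀ * M) = -Real.sqrt μ₁ + Real.sqrt μ₂ - Real.sqrt μ₃ ∨
    Matrix.trace (R₀ * M) = -Real.sqrt μ₁ - Real.sqrt μ₂ + Real.sqrt μ₃ := by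
  obtain ⟨h12, h23, h3⟩ := hμ
  have hμ2 : 0 < μ₂ := lt_of_lt_of_le h3 h23
  have hμ1 : 0 < μ₁ := lt_of_lt_of_le hμ2 h12
  set S : Matrix (Fin 3) (Fin 3) ℝ := R₀ * M with hSdef
  have hHerm : S.IsHermitian := by
    rw [Matrix.IsHermitian, Matrix.conjTranspose_eq_transpose_of_trivial]
    exact hsymm
  have hSS : S * S = Mᵀ * M := by
    have h1 : Sᵀ * S = Mᵀ * M := by
      rw [hSdef, Matrix.transpose_mul, Matrix.mul_assoc, ← Matrix.mul_assoc R₀ᵀ R₀ M, hR,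
        Matrix.one_mul]
    rw [← h1, hsymm]
  set ev : Fin 3 → ℝ := hHerm.eigenvalues with hev
  set U : Matrix (Fin 3) (Fin 3) ℝ := (hHerm.eigenvectorUnitary : Matrix (Fin 3) (Fin 3) ℝ)
    with hU
  have hsU : star U * U = 1 := Unitary.star_mul_self_of_mem hHerm.eigenvectorUnitary.2
  have hofReal : (RCLike.ofReal ∘ ev : Fin 3 → ℝ) = ev := by
    funext i; simp
  have hspec : S = U * Matrix.diagonal ev * star U := by
    conv_lhs => rw [hHerm.spectral_theorem]
    rw [Unitary.conjStarAlgAut_apply, hofReal]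
  -- S * S is conjugate to diagonal of squares
  have hSSconj : S * S = U * Matrix.diagonal (fun i => ev i * ev i) * star U := by
    rw [hspec, Matrix.mul_assoc (U * Matrix.diagonal ev) (star U) _,
      ← Matrix.mul_assoc (star U) (U * Matrix.diagonal ev) (star U),
      ← Matrix.mul_assoc (star U) U (Matrix.diagonal ev), hsU, Matrix.one_mul,
      ← Matrix.mul_assoc (U * Matrix.diagonal ev) (Matrix.diagonal ev) (star U),
      Matrix.mul_assoc U (Matrix.diagonal ev) (Matrix.diagonal ev),
      Matrix.diagonal_mul_diagonal]
  have hcp : (∏ i, (X - C (ev i * ev i))) = (X - C μ₁) * (X - C μ₂) * (X - C μ₃) := by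
    rw [← charpoly_diag3, ← charpoly_unitary_conj hHerm.eigenvectorUnitary
      (Matrix.diagonal (fun i => ev i * ev i)), ← hU, ← hSSconj, hSS, hchar]
  have hroots : ({(ev 0)^2, (ev 1)^2, (ev 2)^2} : Multiset ℝ) = {μ₁, μ₂, μ₃} := by
    have := congrArg Polynomial.roots hcp
    rw [Fin.prod_univ_three, roots_cubic, roots_cubic] at this
    simpa [pow_two] using this
  have hdetS : S.det = M.det := by rw [hSdef, Matrix.det_mul, hRdet, one_mul]
  have hprod : 0 < ev 0 * ev 1 * ev 2 := by
    have hd := hHerm.det_eq_prod_eigenvalues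
    rw [Fin.prod_univ_three] at hd
    have : S.det = ev 0 * ev 1 * ev 2 := by simpa using hd
    rw [← this, hdetS]; exact hM
  have htr : Matrix.trace S = ev 0 + ev 1 + ev 2 := by
    rw [hspec, Matrix.trace_mul_comm, ← Matrix.mul_assoc, hsU, Matrix.one_mul,
      Matrix.trace_diagonal, Fin.sum_univ_three]
  rw [show Matrix.trace (R₀ * M) = Matrix.trace S from rfl, htr]
  exact key_sum hμ1 hμ2 h3 hroots hprod
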